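/- Let a ∈ ℂ and f(x,y) = x^3 + a x^2 y^2 + y^6. Then f has an isolated singularity at the origin (i.e. dim_ℂ ℂ[[x,y]]/Jac(f) < ∞) if and only if 4a^3 + 27 ≠ 0, and in that case the Milnor number equals 10. -/

import Mathlib

set_option synthInstance.maxHeartbeats 1000000
set_option maxHeartbeats 1000000
open MvPowerSeries

noncomputable section
namespace J10aux

abbrev R2 := MvPowerSeries (Fin 2) ℂ

def fe (i j : ℕ) : Fin 2 →₀ ℕ := Finsupp.single 0 i + Finsupp.single 1 j

@[simp] lemma fe_apply0 (i j : ℕ) : fe i j 0 = i := by simp [fe]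
@[simp] lemma fe_apply1 (i j : ℕ) : fe i j 1 = j := by simp [fe]

lemma fe_eq_fe_iff {i j k l : ℕ} : fe i j = fe k l ↔ i = k ∧ j = l := by
  constructor
  · intro h
    exact ⟨by simpa [fe] using congrArg (fun f => f 0) h,
           by simpa [fe] using congrArg (fun f => f 1) h⟩
  · rintro ⟨rfl, rfl⟩; rfl

lemma fe_le_fe_iff {i j k l : ℕ} : fe i j ≤ fe k l ↔ i ≤ k ∧ j ≤ l := by
  constructor
  · intro h; exact ⟨by simpa [fe] using h 0, by simpa [fe] using h 1⟩
  · rintro ⟨h1, h2⟩; intro s; fin_cases s <;> simp [fe] <;> assumption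

lemma fe_sub_fe (i j k l : ℕ) : fe i j - fe k l = fe (i - k) (j - l) := by
  ext s; fin_cases s <;> simp [fe, Finsupp.tsub_apply]

lemma fe_add_fe (i j k l : ℕ) : fe i j + fe k l = fe (i + k) (j + l) := by
  ext s; fin_cases s <;> simp [fe]

def mon (i j : ℕ) (c : ℂ) : R2 := monomial (fe i j) c

lemma mon_eq (i j : ℕ) (c : ℂ) : mon i j c = C (σ := Fin 2) (R := ℂ) c * X 0 ^ i * X 1 ^ j := by
  rw [X_pow_eq, X_pow_eq]
  show mon i j c = monomial (σ := Fin 2) 0 c * _ * _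
  rw [monomial_mul_monomial, monomial_mul_monomial, mul_one, mul_one, zero_add]
  rfl

lemma coeff_mon (i j k l : ℕ) (c : ℂ) :
    coeff (fe i j) (mon k l c) = if i = k ∧ j = l then c else 0 := by
  rw [mon, coeff_monomial]
  by_cases h : fe i j = fe k l
  · rw [if_pos h, if_pos (fe_eq_fe_iff.mp h)]
  · rw [if_neg h, if_neg (fun hc => h (fe_eq_fe_iff.mpr hc))]

variable (a : ℂ)

def g1 : R2 := 3 * X 0 ^ 2 + 2 * (C (σ := Fin 2) (R := ℂ) a) * X 0 * X 1 ^ 2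
def g2 : R2 := 2 * (C (σ := Fin 2) (R := ℂ) a) * X 0 ^ 2 * X 1 + 6 * X 1 ^ 5
def J : Ideal R2 := Ideal.span {g1 a, g2 a}

lemma g1_eq : g1 a = mon 2 0 3 + mon 1 2 (2*a) := by
  rw [mon_eq, mon_eq, g1]; push_cast [map_mul, map_ofNat]; ring
lemma g2_eq : g2 a = mon 2 1 (2*a) + mon 0 5 6 := by
  rw [mon_eq, mon_eq, g2]; push_cast [map_mul, map_ofNat]; ring

lemma coeff_mul_mon (p : R2) (i j k l : ℕ) (c : ℂ) :
    coeff (fe i j) (p * mon k l c) =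
      if k ≤ i ∧ l ≤ j then coeff (fe (i-k) (j-l)) p * c else 0 := by
  rw [mon, coeff_mul_monomial, fe_sub_fe]
  by_cases h : fe k l ≤ fe i j
  · rw [if_pos h, if_pos (fe_le_fe_iff.mp h)]
  · rw [if_neg h, if_neg (fun hc => h (fe_le_fe_iff.mpr hc))]

lemma coeff_mul_g1 (p : R2) (i j : ℕ) :
    coeff (fe i j) (p * g1 a) =
      (if 2 ≤ i then coeff (fe (i-2) j) p * 3 else 0) +
      (if 1 ≤ i ∧ 2 ≤ j then coeff (fe (i-1) (j-2)) p * (2*a) else 0) := by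
  rw [g1_eq, mul_add, map_add, coeff_mul_mon, coeff_mul_mon]
  congr 1
  by_cases h : 2 ≤ i
  · rw [if_pos ⟨h, Nat.zero_le j⟩, if_pos h, Nat.sub_zero]
  · rw [if_neg (fun hc => h hc.1), if_neg h]

lemma coeff_mul_g2 (p : R2) (i j : ℕ) :
    coeff (fe i j) (p * g2 a) =
      (if 2 ≤ i ∧ 1 ≤ j then coeff (fe (i-2) (j-1)) p * (2*a) else 0) +
      (if 5 ≤ j then coeff (fe i (j-5)) p * 6 else 0) := by
  rw [g2_eq, mul_add, map_add, coeff_mul_mon, coeff_mul_mon]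
  congr 1
  by_cases h : 5 ≤ j
  · rw [if_pos ⟨Nat.zero_le i, h⟩, if_pos h, Nat.sub_zero]
  · rw [if_neg (fun hc => h hc.2), if_neg h]


/-- the ten dual functionals -/
def Lam (l : Fin 10) (z : R2) : ℂ :=
  match l with
  | ⟨0,_⟩ => coeff (fe 0 0) z
  | ⟨1,_⟩ => coeff (fe 0 1) z
  | ⟨2,_⟩ => coeff (fe 0 2) z
  | ⟨3,_⟩ => coeff (fe 0 3) z
  | ⟨4,_⟩ => coeff (fe 0 4) z
  | ⟨5,_⟩ => coeff (fe 1 0) z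
  | ⟨6,_⟩ => coeff (fe 1 1) z
  | ⟨7,_⟩ => coeff (fe 1 2) z - (2*a/3) * coeff (fe 2 0) z
  | ⟨8,_⟩ => coeff (fe 1 3) z - (2*a/3) * coeff (fe 2 1) z + (2*a^2/9) * coeff (fe 0 5) z
  | ⟨9,_⟩ => coeff (fe 1 4) z - (2*a/3) * coeff (fe 2 2) z + (4*a^2/9) * coeff (fe 3 0) z
             + (2*a^2/9) * coeff (fe 0 6) z
  | ⟨n+10,h⟩ => absurd h (by omega)

/-- the ten basis monomials : 1, y, y², y³, y⁴, x, xy, xy², xy³, xy⁴ -/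
def bm (k : Fin 10) : R2 :=
  match k with
  | ⟨0,_⟩ => mon 0 0 1
  | ⟨1,_⟩ => mon 0 1 1
  | ⟨2,_⟩ => mon 0 2 1
  | ⟨3,_⟩ => mon 0 3 1
  | ⟨4,_⟩ => mon 0 4 1
  | ⟨5,_⟩ => mon 1 0 1
  | ⟨6,_⟩ => mon 1 1 1
  | ⟨7,_⟩ => mon 1 2 1
  | ⟨8,_⟩ => mon 1 3 1
  | ⟨9,_⟩ => mon 1 4 1
  | ⟨n+10,h⟩ => absurd h (by omega)

lemma Lam_add (l : Fin 10) (y z : R2) : Lam a l (y + z) = Lam a l y + Lam a l z := by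
  fin_cases l <;> simp only [Lam, map_add] <;> ring

lemma Lam_smul (l : Fin 10) (c : ℂ) (z : R2) : Lam a l (c • z) = c * Lam a l z := by
  fin_cases l <;> simp only [Lam, map_smul, smul_eq_mul] <;> ring

lemma Lam_mul_g1 (l : Fin 10) (u : R2) : Lam a l (u * g1 a) = 0 := by
  fin_cases l <;>
  · simp only [Lam, coeff_mul_g1]
    norm_num
    try ring

lemma Lam_mul_g2 (l : Fin 10) (u : R2) : Lam a l (u * g2 a) = 0 := by
  fin_cases l <;>
  · simp only [Lam, coeff_mul_g2]
    norm_num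
    try ring

lemma Lam_of_mem_J {a : ℂ} {z : R2} (hz : z ∈ J a) (l : Fin 10) : Lam a l z = 0 := by
  obtain ⟨u, v, huv⟩ := Ideal.mem_span_pair.mp hz
  rw [← huv, Lam_add, Lam_mul_g1, Lam_mul_g2, add_zero]

lemma Lam_bm (l k : Fin 10) : Lam a l (bm k) = if l = k then 1 else 0 := by
  fin_cases l <;> fin_cases k <;>
    simp [Lam, bm, coeff_mon, fe_eq_fe_iff] <;>
    rw [if_neg (by decide)]

/-- generic commutative-algebra helper : cancel a nonzero complex constant -/
lemma cancel_const {Q : Type*} [CommRing Q] [Algebra ℂ Q] {c : ℂ} (hc : c ≠ 0) {v : Q}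
    (h : algebraMap ℂ Q c * v = 0) : v = 0 := by
  have h2 := congrArg (fun w => algebraMap ℂ Q c⁻¹ * w) h
  simpa [← mul_assoc, ← map_mul, inv_mul_cancel₀ hc] using h2

section ringlemmas
variable {Q : Type*} [CommRing Q] (x y A : Q)
variable (r1 : 3*x^2 + 2*A*x*y^2 = 0) (r2 : 2*A*x^2*y + 6*y^5 = 0)

include r1 r2 in
lemma key_xy5 : (2*(4*A^3+27)) * (x*y^5) = 0 := by
  linear_combination (4*A^2*y^3 - 6*A*x*y) * r1 + 9*x*r2

include r1 r2 in
lemma key_y7 (h5 : x*y^5 = 0) : (18:Q) * y^7 = 0 := by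
  linear_combination 3*y^2*r2 - 2*A*y^3*r1 + 4*A^2*h5

include r1 in
lemma key_x7 (h5 : x*y^5 = 0) : (729:Q) * x^7 = 0 := by
  linear_combination (243*x^5 - 162*A*x^4*y^2 + 108*A^2*x^3*y^4 - 72*A^3*x^2*y^6
    + 48*A^4*x*y^8 - 32*A^5*y^10) * r1 + 64*A^6*y^7*h5

include r2 r1 in
lemma key_y5 (r : ℕ) : (18:Q)*y^(r+5) = 4*A^2*(x*y^(r+3)) := by
  linear_combination 3*y^r*r2 - 2*A*y^(r+1)*r1

include r1 in
lemma key_xstep (i j : ℕ) : (3:Q)*(x^(i+2)*y^j) = -2*A*(x^(i+1)*y^(j+2)) := by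
  linear_combination x^i*y^j*r1

end ringlemmas

section Quot
variable (a : ℂ)

/-- the quotient map -/
def mk2 : R2 →+* (R2 ⧸ J a) := Ideal.Quotient.mk (J a)

def xq : R2 ⧸ J a := mk2 a (X 0)
def yq : R2 ⧸ J a := mk2 a (X 1)
def Aq : R2 ⧸ J a := algebraMap ℂ _ a

lemma mk2_C (c : ℂ) : mk2 a (C (σ := Fin 2) (R := ℂ) c) = algebraMap ℂ (R2 ⧸ J a) c := by
  rw [c_eq_algebraMap]
  exact ((Ideal.Quotient.mkₐ ℂ (J a)).commutes c)

lemma r1q : 3*(xq a)^2 + 2*(Aq a)*(xq a)*(yq a)^2 = 0 := by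
  have h : mk2 a (g1 a) = 0 := Ideal.Quotient.eq_zero_iff_mem.mpr
    (Ideal.subset_span (by simp [J]))
  rw [g1] at h
  simp only [map_add, map_mul, map_pow, map_ofNat, mk2_C] at h
  exact h

lemma r2q : 2*(Aq a)*(xq a)^2*(yq a) + 6*(yq a)^5 = 0 := by
  have h : mk2 a (g2 a) = 0 := Ideal.Quotient.eq_zero_iff_mem.mpr
    (Ideal.subset_span (by simp [J]))
  rw [g2] at h
  simp only [map_add, map_mul, map_pow, map_ofNat, mk2_C] at h
  exact h

lemma Aq_pows (n : ℕ) : (Aq a)^n = algebraMap ℂ (R2 ⧸ J a) (a^n) := by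
  rw [map_pow]; rfl

variable {a}
variable (ht : 4*a^3 + 27 ≠ 0)

include ht in
lemma hxy5 : xq a * (yq a)^5 = 0 := by
  apply cancel_const (c := 2*(4*a^3+27)) (by simpa using ht)
  have h := key_xy5 (xq a) (yq a) (Aq a) (r1q a) (r2q a)
  rw [← h]
  simp only [Aq, map_mul, map_add, map_pow, map_ofNat]

include ht in
lemma hy7 : (yq a)^7 = 0 := by
  apply cancel_const (c := (18:ℂ)) (by norm_num)
  have h := key_y7 (xq a) (yq a) (Aq a) (r1q a) (r2q a) (hxy5 ht)
  rw [← h]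
  simp only [map_ofNat]

include ht in
lemma hx7 : (xq a)^7 = 0 := by
  apply cancel_const (c := (729:ℂ)) (by norm_num)
  have h := key_x7 (xq a) (yq a) (Aq a) (r1q a) (hxy5 ht)
  rw [← h]
  simp only [map_ofNat]

end Quot
/-! ### decomposition of a power series -/

lemma fe_eta (d : Fin 2 →₀ ℕ) : fe (d 0) (d 1) = d := by
  ext s; fin_cases s <;> simp [fe]

lemma fe_n0 (n : ℕ) : fe n 0 = Finsupp.single 0 n := by
  ext s; fin_cases s <;> simp [fe]

lemma fe_0n (n : ℕ) : fe 0 n = Finsupp.single 1 n := by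
  ext s; fin_cases s <;> simp [fe]

lemma X0_pow (n : ℕ) : (X 0 : R2)^n = mon n 0 1 := by
  rw [X_pow_eq, mon, fe_n0]

lemma X1_pow (n : ℕ) : (X 1 : R2)^n = mon 0 n 1 := by
  rw [X_pow_eq, mon, fe_0n]

def G0 (f : R2) : R2 := fun d => coeff (fe (d 0 + 7) (d 1)) f
def G1 (f : R2) : R2 := fun d => if d 0 ≤ 6 then coeff (fe (d 0) (d 1 + 7)) f else 0
def boxSum (f : R2) : R2 :=
  ∑ p ∈ Finset.range 7 ×ˢ Finset.range 7, mon p.1 p.2 (coeff (fe p.1 p.2) f)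

lemma coeff_X0G0 (f : R2) (i j : ℕ) :
    coeff (fe i j) ((X 0)^7 * G0 f) = if 7 ≤ i then coeff (fe i j) f else 0 := by
  rw [mul_comm, X0_pow, coeff_mul_mon]
  by_cases h : 7 ≤ i
  · rw [if_pos ⟨h, Nat.zero_le j⟩, if_pos h, mul_one, Nat.sub_zero]
    have : coeff (fe (i-7) j) (G0 f) = coeff (fe ((i-7) + 7) j) f := by
      rw [coeff_apply]
      show coeff (fe ((fe (i-7) j) 0 + 7) ((fe (i-7) j) 1)) f = _
      rw [fe_apply0, fe_apply1]
    rw [this, Nat.sub_add_cancel h]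
  · rw [if_neg (fun hc => h hc.1), if_neg h]

lemma coeff_X1G1 (f : R2) (i j : ℕ) :
    coeff (fe i j) ((X 1)^7 * G1 f) =
      if 7 ≤ j ∧ i ≤ 6 then coeff (fe i j) f else 0 := by
  rw [mul_comm, X1_pow, coeff_mul_mon]
  by_cases h : 7 ≤ j
  · rw [if_pos ⟨Nat.zero_le i, h⟩, mul_one, Nat.sub_zero]
    have : coeff (fe i (j-7)) (G1 f) =
        if i ≤ 6 then coeff (fe i ((j-7) + 7)) f else 0 := by
      rw [coeff_apply]
      show (if (fe i (j-7)) 0 ≤ 6 then coeff (fe ((fe i (j-7)) 0) ((fe i (j-7)) 1 + 7)) f else 0) = _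
      rw [fe_apply0, fe_apply1]
    rw [this, Nat.sub_add_cancel h]
    by_cases h2 : i ≤ 6
    · rw [if_pos h2, if_pos ⟨h, h2⟩]
    · rw [if_neg h2, if_neg (fun hc => h2 hc.2)]
  · rw [if_neg (fun hc => h hc.2), if_neg (fun hc => h hc.1)]

lemma coeff_boxSum (f : R2) (i j : ℕ) :
    coeff (fe i j) (boxSum f) =
      if i ≤ 6 ∧ j ≤ 6 then coeff (fe i j) f else 0 := by
  rw [boxSum, map_sum]
  by_cases h : i ≤ 6 ∧ j ≤ 6
  · rw [if_pos h, Finset.sum_eq_single_of_mem (i, j)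
      (by simp only [Finset.mem_product, Finset.mem_range]; omega)]
    · rw [coeff_mon, if_pos ⟨rfl, rfl⟩]
    · intro b _ hbne
      rw [coeff_mon, if_neg]
      rintro ⟨h1, h2⟩
      exact hbne (Prod.ext_iff.mpr ⟨h1.symm, h2.symm⟩)
  · rw [if_neg h, Finset.sum_eq_zero]
    intro b hb
    simp only [Finset.mem_product, Finset.mem_range] at hb
    rw [coeff_mon, if_neg]
    rintro ⟨rfl, rfl⟩
    exact h ⟨by omega, by omega⟩

lemma decomp (f : R2) : f = boxSum f + (X 0)^7 * G0 f + (X 1)^7 * G1 f := by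
  ext d
  rw [← fe_eta d, map_add, map_add, coeff_boxSum, coeff_X0G0, coeff_X1G1]
  split_ifs <;> first
    | omega
    | simp
    | (exfalso; omega)

/-! ### spanning -/

lemma const_shift {Q : Type*} [CommRing Q] [Algebra ℂ Q] {c d : ℂ} (hc : c ≠ 0) {v w : Q}
    (h : algebraMap ℂ Q c * v = algebraMap ℂ Q d * w) : v = (c⁻¹ * d) • w := by
  have h1 : v = algebraMap ℂ Q c⁻¹ * (algebraMap ℂ Q c * v) := by
    rw [← mul_assoc, ← map_mul, inv_mul_cancel₀ hc, map_one, one_mul]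
  rw [h1, h, ← mul_assoc, ← map_mul, Algebra.smul_def]

section Span
variable {a : ℂ}

lemma mk2_mon (i j : ℕ) (c : ℂ) :
    mk2 a (mon i j c) = algebraMap ℂ (R2 ⧸ J a) c * ((xq a)^i * (yq a)^j) := by
  rw [mon_eq]
  simp only [map_mul, map_pow, mk2_C]
  rw [mul_assoc]
  rfl

/-- the span of the ten basis monomials -/
def SB (a : ℂ) : Submodule ℂ (R2 ⧸ J a) := Submodule.span ℂ (Set.range (fun k => mk2 a (bm k)))

lemma bm_mem (k : Fin 10) : mk2 a (bm k) ∈ SB a := Submodule.subset_span ⟨k, rfl⟩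

lemma xy_pow_mem_aux (k : Fin 10) (i j : ℕ) (h : bm k = mon i j 1) :
    (xq a)^i * (yq a)^j ∈ SB a := by
  have := bm_mem (a := a) k
  rwa [h, mk2_mon, map_one, one_mul] at this

variable (ht : 4*a^3 + 27 ≠ 0)

include ht in
lemma mem_xy (m : ℕ) : xq a * (yq a)^m ∈ SB a := by
  rcases le_or_gt m 4 with hm | hm
  · have h1 : xq a * (yq a)^m = (xq a)^1 * (yq a)^m := by ring
    rw [h1]
    interval_cases m
    · exact xy_pow_mem_aux 5 1 0 rfl
    · exact xy_pow_mem_aux 6 1 1 rfl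
    · exact xy_pow_mem_aux 7 1 2 rfl
    · exact xy_pow_mem_aux 8 1 3 rfl
    · exact xy_pow_mem_aux 9 1 4 rfl
  · obtain ⟨r, rfl⟩ : ∃ r, m = r + 5 := ⟨m - 5, by omega⟩
    have h1 : xq a * (yq a)^(r+5) = (yq a)^r * (xq a * (yq a)^5) := by ring
    rw [h1, hxy5 ht, mul_zero]
    exact (SB a).zero_mem

include ht in
lemma mem_y (j : ℕ) : (yq a)^j ∈ SB a := by
  rcases le_or_gt j 4 with hj | hj
  · have h1 : (yq a)^j = (xq a)^0 * (yq a)^j := by ring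
    rw [h1]
    interval_cases j
    · exact xy_pow_mem_aux 0 0 0 rfl
    · exact xy_pow_mem_aux 1 0 1 rfl
    · exact xy_pow_mem_aux 2 0 2 rfl
    · exact xy_pow_mem_aux 3 0 3 rfl
    · exact xy_pow_mem_aux 4 0 4 rfl
  · obtain ⟨r, rfl⟩ : ∃ r, j = r + 5 := ⟨j - 5, by omega⟩
    have h := key_y5 (xq a) (yq a) (Aq a) (r1q a) (r2q a) r
    have h18 : algebraMap ℂ (R2 ⧸ J a) 18 * (yq a)^(r+5)
        = algebraMap ℂ (R2 ⧸ J a) (4*a^2) * (xq a * (yq a)^(r+3)) := by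
      simp only [map_mul, map_pow, map_ofNat]
      rw [show algebraMap ℂ (R2 ⧸ J a) a = Aq a from rfl]
      linear_combination h
    rw [const_shift (by norm_num) h18]
    exact (SB a).smul_mem _ (mem_xy ht (r+3))

include ht in
lemma mem_xy_pow (i j : ℕ) : (xq a)^i * (yq a)^j ∈ SB a := by
  induction i generalizing j with
  | zero => rw [pow_zero, one_mul]; exact mem_y ht j
  | succ i ih =>
    match i with
    | 0 => rw [pow_one]; exact mem_xy ht j
    | Nat.succ i =>
      have h := key_xstep (xq a) (yq a) (Aq a) (r1q a) i j
      have h3 : algebraMap ℂ (R2 ⧸ J a) 3 * ((xq a)^(i+2) * (yq a)^j)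
          = algebraMap ℂ (R2 ⧸ J a) (-2*a) * ((xq a)^(i+1) * (yq a)^(j+2)) := by
        simp only [map_mul, map_neg, map_ofNat]
        rw [show algebraMap ℂ (R2 ⧸ J a) a = Aq a from rfl]
        linear_combination h
      rw [const_shift (by norm_num) h3]
      exact (SB a).smul_mem _ (ih (j+2))

include ht in
lemma SB_top : SB a = ⊤ := by
  rw [Submodule.eq_top_iff']
  intro q
  obtain ⟨f, rfl⟩ := Ideal.Quotient.mk_surjective (I := J a) q
  show mk2 a f ∈ SB a
  rw [decomp f]
  simp only [map_add, map_mul, map_pow]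
  have hx : (mk2 a (X 0))^7 = 0 := hx7 ht
  have hy : (mk2 a (X 1))^7 = 0 := hy7 ht
  rw [show mk2 a (X 0) = xq a from rfl] at hx
  rw [show mk2 a (X 1) = yq a from rfl] at hy
  show mk2 a (boxSum f) + (xq a)^7 * _ + (yq a)^7 * _ ∈ SB a
  rw [hx, hy, zero_mul, zero_mul, add_zero, add_zero, boxSum, map_sum]
  apply Submodule.sum_mem
  intro p _
  rw [mk2_mon, ← Algebra.smul_def]
  exact (SB a).smul_mem _ (mem_xy_pow ht p.1 p.2)

end Span
/-! ### linear independence and the basis -/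

section Indep
variable {a : ℂ}

lemma Lam_zero (l : Fin 10) : Lam a l 0 = 0 := by
  fin_cases l <;> simp [Lam]

lemma Lam_sum {ι : Type*} (l : Fin 10) (s : Finset ι) (f : ι → R2) :
    Lam a l (∑ i ∈ s, f i) = ∑ i ∈ s, Lam a l (f i) := by
  classical
  induction s using Finset.induction_on with
  | empty => simpa using Lam_zero l
  | insert _ _ h ih => rw [Finset.sum_insert h, Finset.sum_insert h, Lam_add, ih]

lemma mem_J_of_mk2_zero {z : R2} (h : mk2 a z = 0) : z ∈ J a :=
  Ideal.Quotient.eq_zero_iff_mem.mp h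

lemma mk2_smul (c : ℂ) (z : R2) : mk2 a (c • z) = c • mk2 a z :=
  map_smul (Ideal.Quotient.mkₐ ℂ (J a)) c z

lemma qb_li : LinearIndependent ℂ (fun k => mk2 a (bm k)) := by
  rw [Fintype.linearIndependent_iff]
  intro c hc l
  have hz : (∑ k : Fin 10, c k • bm k) ∈ J a := by
    apply mem_J_of_mk2_zero
    rw [map_sum]
    simpa only [mk2_smul] using hc
  have h0 := Lam_of_mem_J hz l
  rw [Lam_sum] at h0
  simp only [Lam_smul, Lam_bm] at h0
  simpa using h0

variable (ht : 4*a^3 + 27 ≠ 0)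

def qbasis (ht : 4*a^3 + 27 ≠ 0) : Module.Basis (Fin 10) ℂ (R2 ⧸ J a) :=
  Module.Basis.mk qb_li (by rw [show Submodule.span ℂ (Set.range fun k => mk2 a (bm k)) = SB a from rfl,
    SB_top ht])

include ht in
lemma fin_dim : FiniteDimensional ℂ (R2 ⧸ J a) :=
  Module.Finite.of_basis (qbasis ht)

include ht in
lemma finrank10 : Module.finrank ℂ (R2 ⧸ J a) = 10 := by
  rw [Module.finrank_eq_card_basis (qbasis ht), Fintype.card_fin]

end Indep
/-! ### the degenerate case : infinite dimensionality -/

section Inf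
variable {a : ℂ}

/-- c = -(2a/3), the slope of the degenerate curve -/
def cc (a : ℂ) : ℂ := -(2*a/3)

/-- the antidiagonal functionals -/
def Linf (a : ℂ) (n : ℕ) (z : R2) : ℂ :=
  ∑ i ∈ Finset.range (n/2 + 1), (cc a)^i * coeff (fe i (n - 2*i)) z

lemma sum_shift2 (M : ℕ) (F : ℕ → ℂ) :
    ∑ i ∈ Finset.range (M+2), (if 2 ≤ i then F (i-2) else 0) = ∑ k ∈ Finset.range M, F k := by
  rw [Finset.sum_range_succ', Finset.sum_range_succ']
  simp

lemma sum_shift1 (M : ℕ) (F : ℕ → ℂ) :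
    ∑ i ∈ Finset.range (M+1), (if 1 ≤ i then F (i-1) else 0) = ∑ k ∈ Finset.range M, F k := by
  rw [Finset.sum_range_succ']
  simp

/-- coefficient cancellation for g1 : holds for every a -/
lemma cc_rel1 (k : ℕ) : (3:ℂ)*cc a^(k+2) + 2*a*cc a^(k+1) = 0 := by
  have h : (3:ℂ)*cc a^(k+2) + 2*a*cc a^(k+1) = cc a^(k+1) * (3*cc a + 2*a) := by ring
  have h2 : (3:ℂ)*cc a + 2*a = 0 := by simp [cc]; ring
  rw [h, h2, mul_zero]

/-- coefficient cancellation for g2 : needs 4a³+27 = 0 -/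
lemma cc_rel2 (ht0 : 4*a^3 + 27 = 0) (k : ℕ) : (2:ℂ)*a*cc a^(k+2) + 6*cc a^k = 0 := by
  have h : (2:ℂ)*a*cc a^(k+2) + 6*cc a^k = cc a^k * (2*a*cc a^2 + 6) := by ring
  have h2 : (2:ℂ)*a*cc a^2 + 6 = (2/9) * (4*a^3+27) := by simp [cc]; ring
  rw [h, h2, ht0, mul_zero, mul_zero]

lemma Linf_mul_g1 (n : ℕ) (u : R2) : Linf a n (u * g1 a) = 0 := by
  have hstep : ∀ i ∈ Finset.range (n/2+1),
      cc a^i * coeff (fe i (n - 2*i)) (u * g1 a)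
      = (if 2 ≤ i then (if 2*(i-2)+4 ≤ n then 3*cc a^((i-2)+2) * coeff (fe (i-2) (n-2*(i-2)-4)) u else 0) else 0)
      + (if 1 ≤ i then (if 2*(i-1)+4 ≤ n then 2*a*cc a^((i-1)+1) * coeff (fe (i-1) (n-2*(i-1)-4)) u else 0) else 0) := by
    intro i hi
    simp only [Finset.mem_range] at hi
    rw [coeff_mul_g1, mul_add]
    congr 1
    · by_cases h2 : 2 ≤ i
      · rw [if_pos h2, if_pos h2, if_pos (by omega : 2*(i-2)+4 ≤ n)]
        have he : n - 2*(i-2) - 4 = n - 2*i := by omega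
        have he2 : (i-2)+2 = i := by omega
        rw [he, he2]; ring
      · rw [if_neg h2, if_neg h2, mul_zero]
    · by_cases h1 : 1 ≤ i ∧ 2 ≤ n - 2*i
      · rw [if_pos h1, if_pos h1.1, if_pos (by omega : 2*(i-1)+4 ≤ n)]
        have he : n - 2*(i-1) - 4 = n - 2*i - 2 := by omega
        have he2 : (i-1)+1 = i := by omega
        rw [he, he2]; ring
      · rw [if_neg h1, mul_zero]
        by_cases hi1 : 1 ≤ i
        · rw [if_pos hi1, if_neg (by omega)]
        · rw [if_neg hi1]
  rw [Linf, Finset.sum_congr rfl hstep, Finset.sum_add_distrib]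
  have ext1 : ∑ i ∈ Finset.range (n/2+1),
      (if 2 ≤ i then (if 2*(i-2)+4 ≤ n then 3*cc a^((i-2)+2) * coeff (fe (i-2) (n-2*(i-2)-4)) u else 0) else 0)
      = ∑ i ∈ Finset.range (n/2+1+2),
      (if 2 ≤ i then (if 2*(i-2)+4 ≤ n then 3*cc a^((i-2)+2) * coeff (fe (i-2) (n-2*(i-2)-4)) u else 0) else 0) := by
    apply Finset.sum_subset (Finset.range_subset_range.mpr (by omega))
    intro i _ hni
    simp only [Finset.mem_range, not_lt] at hni
    rcases le_or_gt 2 i with h2 | h2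
    · rw [if_pos h2, if_neg (by omega)]
    · rw [if_neg (by omega)]
  have ext2 : ∑ i ∈ Finset.range (n/2+1),
      (if 1 ≤ i then (if 2*(i-1)+4 ≤ n then 2*a*cc a^((i-1)+1) * coeff (fe (i-1) (n-2*(i-1)-4)) u else 0) else 0)
      = ∑ i ∈ Finset.range (n/2+1+1),
      (if 1 ≤ i then (if 2*(i-1)+4 ≤ n then 2*a*cc a^((i-1)+1) * coeff (fe (i-1) (n-2*(i-1)-4)) u else 0) else 0) := by
    apply Finset.sum_subset (Finset.range_subset_range.mpr (by omega))
    intro i _ hni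
    simp only [Finset.mem_range, not_lt] at hni
    rcases le_or_gt 1 i with h1 | h1
    · rw [if_pos h1, if_neg (by omega)]
    · rw [if_neg (by omega)]
  rw [ext1, ext2,
    sum_shift2 (n/2+1) (fun k => if 2*k+4 ≤ n then 3*cc a^(k+2) * coeff (fe k (n-2*k-4)) u else 0),
    sum_shift1 (n/2+1) (fun k => if 2*k+4 ≤ n then 2*a*cc a^(k+1) * coeff (fe k (n-2*k-4)) u else 0),
    ← Finset.sum_add_distrib]
  apply Finset.sum_eq_zero
  intro k _
  by_cases hk : 2*k+4 ≤ n
  · rw [if_pos hk, if_pos hk]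
    have := cc_rel1 (a := a) k
    linear_combination coeff (fe k (n-2*k-4)) u * this
  · rw [if_neg hk, if_neg hk, add_zero]

lemma Linf_mul_g2 (ht0 : 4*a^3 + 27 = 0) (n : ℕ) (u : R2) : Linf a n (u * g2 a) = 0 := by
  have hstep : ∀ i ∈ Finset.range (n/2+1),
      cc a^i * coeff (fe i (n - 2*i)) (u * g2 a)
      = (if 2 ≤ i then (if 2*(i-2)+5 ≤ n then 2*a*cc a^((i-2)+2) * coeff (fe (i-2) (n-2*(i-2)-5)) u else 0) else 0)
      + (if 2*i+5 ≤ n then 6*cc a^i * coeff (fe i (n-2*i-5)) u else 0) := by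
    intro i hi
    simp only [Finset.mem_range] at hi
    rw [coeff_mul_g2, mul_add]
    congr 1
    · by_cases h2 : 2 ≤ i ∧ 1 ≤ n - 2*i
      · rw [if_pos h2, if_pos h2.1, if_pos (by omega : 2*(i-2)+5 ≤ n)]
        have he : n - 2*(i-2) - 5 = n - 2*i - 1 := by omega
        have he2 : (i-2)+2 = i := by omega
        rw [he, he2]; ring
      · rw [if_neg h2, mul_zero]
        by_cases hi2 : 2 ≤ i
        · rw [if_pos hi2, if_neg (by omega)]
        · rw [if_neg hi2]
    · by_cases h5 : 5 ≤ n - 2*i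
      · rw [if_pos h5, if_pos (by omega : 2*i+5 ≤ n)]
        ring
      · rw [if_neg h5, if_neg (by omega), mul_zero]
  rw [Linf, Finset.sum_congr rfl hstep, Finset.sum_add_distrib]
  have ext1 : ∑ i ∈ Finset.range (n/2+1),
      (if 2 ≤ i then (if 2*(i-2)+5 ≤ n then 2*a*cc a^((i-2)+2) * coeff (fe (i-2) (n-2*(i-2)-5)) u else 0) else 0)
      = ∑ i ∈ Finset.range (n/2+1+2),
      (if 2 ≤ i then (if 2*(i-2)+5 ≤ n then 2*a*cc a^((i-2)+2) * coeff (fe (i-2) (n-2*(i-2)-5)) u else 0) else 0) := by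
    apply Finset.sum_subset (Finset.range_subset_range.mpr (by omega))
    intro i _ hni
    simp only [Finset.mem_range, not_lt] at hni
    rcases le_or_gt 2 i with h2 | h2
    · rw [if_pos h2, if_neg (by omega)]
    · rw [if_neg (by omega)]
  rw [ext1,
    sum_shift2 (n/2+1) (fun k => if 2*k+5 ≤ n then 2*a*cc a^(k+2) * coeff (fe k (n-2*k-5)) u else 0),
    ← Finset.sum_add_distrib]
  apply Finset.sum_eq_zero
  intro k _
  by_cases hk : 2*k+5 ≤ n
  · rw [if_pos hk, if_pos hk]
    have := cc_rel2 ht0 (a := a) k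
    linear_combination coeff (fe k (n-2*k-5)) u * this
  · rw [if_neg hk, if_neg hk, add_zero]

lemma Linf_mon (n m : ℕ) : Linf a n (mon 0 m 1) = if n = m then 1 else 0 := by
  rw [Linf, Finset.sum_eq_single 0]
  · rw [coeff_mon, pow_zero, one_mul]
    by_cases h : n = m
    · rw [if_pos ⟨rfl, by omega⟩, if_pos h]
    · rw [if_neg (by omega), if_neg h]
  · intro i _ hi0
    rw [coeff_mon, if_neg (fun hc => hi0 hc.1), mul_zero]
  · intro h
    exact absurd (Finset.mem_range.mpr (by omega)) h

lemma Linf_zero (n : ℕ) : Linf a n 0 = 0 := by simp [Linf]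

lemma Linf_add (n : ℕ) (y z : R2) : Linf a n (y + z) = Linf a n y + Linf a n z := by
  simp [Linf, map_add, mul_add, Finset.sum_add_distrib]

lemma Linf_smul (n : ℕ) (c : ℂ) (z : R2) : Linf a n (c • z) = c * Linf a n z := by
  rw [Linf, Linf, Finset.mul_sum]
  apply Finset.sum_congr rfl
  intro i _
  rw [map_smul, smul_eq_mul]
  ring

lemma Linf_sum {ι : Type*} (n : ℕ) (s : Finset ι) (f : ι → R2) :
    Linf a n (∑ i ∈ s, f i) = ∑ i ∈ s, Linf a n (f i) := by
  classical
  induction s using Finset.induction_on with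
  | empty => simpa using Linf_zero n
  | insert _ _ h ih => rw [Finset.sum_insert h, Finset.sum_insert h, Linf_add, ih]

lemma Linf_of_mem_J (ht0 : 4*a^3 + 27 = 0) {z : R2} (hz : z ∈ J a) (n : ℕ) :
    Linf a n z = 0 := by
  obtain ⟨u, v, huv⟩ := Ideal.mem_span_pair.mp hz
  rw [← huv, Linf_add, Linf_mul_g1, Linf_mul_g2 ht0, add_zero]

lemma ym_li (ht0 : 4*a^3 + 27 = 0) :
    LinearIndependent ℂ (fun m : ℕ => mk2 a (mon 0 m 1)) := by
  rw [linearIndependent_iff']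
  intro s g hg m hm
  have hz : (∑ k ∈ s, g k • mon 0 k 1) ∈ J a := by
    apply mem_J_of_mk2_zero
    rw [map_sum]
    simpa only [mk2_smul] using hg
  have h0 := Linf_of_mem_J ht0 hz m
  rw [Linf_sum] at h0
  simp only [Linf_smul, Linf_mon, mul_ite, mul_one, mul_zero] at h0
  rw [Finset.sum_ite_eq s m g, if_pos hm] at h0
  exact h0

lemma not_fd (ht0 : 4*a^3 + 27 = 0) : ¬ FiniteDimensional ℂ (R2 ⧸ J a) := by
  intro hfd
  have h := (ym_li ht0).lt_aleph0_of_finite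
  rw [Cardinal.mk_nat] at h
  exact lt_irrefl _ h

end Inf
end J10aux

/-- For `f = x³ + a x² y² + y⁶` (type `J₁₀`), `f` has an isolated singularity
(finite Milnor number) iff `4a³ + 27 ≠ 0`, in which case the Milnor number is `10`. -/
theorem J10_isolated_iff (a : ℂ) :
    (FiniteDimensional ℂ
        (MvPowerSeries (Fin 2) ℂ ⧸
          Ideal.span {3 * X 0 ^ 2 + 2 * (C (σ := Fin 2) (R := ℂ) a) * X 0 * X 1 ^ 2,
            2 * (C (σ := Fin 2) (R := ℂ) a) * X 0 ^ 2 * X 1 + 6 * X 1 ^ 5}) ↔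
      4 * a ^ 3 + 27 ≠ 0) ∧
    (4 * a ^ 3 + 27 ≠ 0 →
      Module.finrank ℂ
        (MvPowerSeries (Fin 2) ℂ ⧸
          Ideal.span {3 * X 0 ^ 2 + 2 * (C (σ := Fin 2) (R := ℂ) a) * X 0 * X 1 ^ 2,
            2 * (C (σ := Fin 2) (R := ℂ) a) * X 0 ^ 2 * X 1 + 6 * X 1 ^ 5}) = 10) := by
  constructor
  · constructor
    · intro hfd
      by_contra ht0
      exact J10aux.not_fd ht0 hfd
    · intro ht
      exact J10aux.fin_dim ht
  · intro ht
    exact J10aux.finrank10 ht
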